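/- Every prime graph that embeds as an induced subgraph into C_4^ℓ for some ℓ has at most 2 vertices. -/

import Mathlib

/-- The recursive blow-up of the 4-cycle of height `ℓ`: vertices are `[4]^ℓ`, and
distinct `σ, τ` are adjacent iff `σ i - τ i ≡ ±1 (mod 4)` where `i` is the first
position at which they differ. -/
def C4blow (ℓ : ℕ) : SimpleGraph (Fin ℓ → ZMod 4) where
  Adj σ τ := ∃ i : Fin ℓ, (∀ j, j < i → σ j = τ j) ∧ (σ i - τ i = 1 ∨ σ i - τ i = 3)
  symm := by
    constructor
    rintro σ τ ⟨i, h, hd⟩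
    refine ⟨i, fun j hj => (h j hj).symm, ?_⟩
    have hneg : τ i - σ i = -(σ i - τ i) := by ring
    rcases hd with h1 | h3
    · right; rw [hneg, h1]; decide
    · left; rw [hneg, h3]; decide
  loopless := by
    constructor
    rintro σ ⟨i, -, hd⟩
    rcases hd with h | h <;> rw [sub_self] at h <;> exact absurd h (by decide)
/-- Substitution of the graph `F₂` for the vertex `v` of the graph `F₁`. -/
def subst {V₁ V₂ : Type*} (F₁ : SimpleGraph V₁) (F₂ : SimpleGraph V₂) (v : V₁) :
    SimpleGraph ({w : V₁ // w ≠ v} ⊕ V₂) where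
  Adj a b :=
    match a, b with
    | Sum.inl w, Sum.inl w' => F₁.Adj w.1 w'.1
    | Sum.inl w, Sum.inr _ => F₁.Adj w.1 v
    | Sum.inr _, Sum.inl w => F₁.Adj w.1 v
    | Sum.inr u, Sum.inr u' => F₂.Adj u u'
  symm := by
    constructor
    rintro (w | u) (w' | u') h
    · exact h.symm
    · exact h
    · exact h
    · exact h.symm
  loopless := by
    constructor
    rintro (w | u) h
    · exact F₁.loopless.irrefl _ h
    · exact F₂.loopless.irrefl _ h
private lemma C4blow_adj_head_ne {ℓ : ℕ} (σ τ : Fin (ℓ + 1) → ZMod 4) (h : σ 0 ≠ τ 0) :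
    (C4blow (ℓ + 1)).Adj σ τ ↔ (σ 0 - τ 0 = 1 ∨ σ 0 - τ 0 = 3) := by
  constructor
  · rintro ⟨i, hj, hd⟩
    rcases eq_or_ne i 0 with rfl | hi
    · exact hd
    · exact absurd (hj 0 (lt_of_le_of_ne (Fin.zero_le i) (Ne.symm hi))) h
  · intro hd
    exact ⟨0, fun j hj => absurd hj (by simp), hd⟩

private lemma C4blow_adj_head_eq {ℓ : ℕ} (σ τ : Fin (ℓ + 1) → ZMod 4) (h : σ 0 = τ 0) :
    (C4blow (ℓ + 1)).Adj σ τ ↔ (C4blow ℓ).Adj (σ ∘ Fin.succ) (τ ∘ Fin.succ) := by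
  constructor
  · rintro ⟨i, hj, hd⟩
    rcases Fin.eq_zero_or_eq_succ i with rfl | ⟨k, rfl⟩
    · rw [h, sub_self] at hd
      rcases hd with h1 | h1 <;> exact absurd h1 (by decide)
    · exact ⟨k, fun j hjk => hj j.succ (Fin.succ_lt_succ_iff.mpr hjk), hd⟩
  · rintro ⟨k, hj, hd⟩
    refine ⟨k.succ, ?_, hd⟩
    intro j hjk
    rcases Fin.eq_zero_or_eq_succ j with rfl | ⟨m, rfl⟩
    · exact h
    · exact hj m (Fin.succ_lt_succ_iff.mp hjk)

private lemma exists_module_of_embeds {V : Type*} (ℓ : ℕ) : ∀ [Fintype V] [DecidableEq V]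
    (G : SimpleGraph V) (_e : G ↪g C4blow ℓ) (_h3 : 3 ≤ Fintype.card V),
    ∃ M : Finset V, 2 ≤ M.card ∧ M.card < Fintype.card V ∧
      ∀ x ∉ M, ∀ y ∈ M, ∀ z ∈ M, (G.Adj x y ↔ G.Adj x z) := by
  induction ℓ with
  | zero =>
    intro _ _ G e h3
    have hle : Fintype.card V ≤ Fintype.card (Fin 0 → ZMod 4) :=
      Fintype.card_le_of_injective _ e.injective
    simp [Fintype.card_fun] at hle
    omega
  | succ ℓ ih =>
    intro _ _ G e h3
    by_cases hall : ∀ v w : V, e v 0 = e w 0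
    · -- all first coordinates agree: project to C4blow ℓ
      have hinj : Function.Injective (fun v : V => e v ∘ Fin.succ) := by
        intro a b hab
        apply e.injective
        funext i
        rcases Fin.eq_zero_or_eq_succ i with rfl | ⟨k, rfl⟩
        · exact hall a b
        · exact congrFun hab k
      exact ih G ⟨⟨fun v => e v ∘ Fin.succ, hinj⟩, by
        intro a b
        simp only [Function.Embedding.coeFn_mk]
        rw [← C4blow_adj_head_eq _ _ (hall a b)]
        exact e.map_rel_iff⟩ h3
    · push_neg at hall
      obtain ⟨v, w, hvw⟩ := hall
      by_cases hsing : ∃ a b : V, a ≠ b ∧ e a 0 = e b 0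
      · -- a class with ≥ 2 elements is a proper module
        obtain ⟨a, b, hab, heq⟩ := hsing
        refine ⟨Finset.univ.filter (fun x => e x 0 = e a 0), ?_, ?_, ?_⟩
        · refine Finset.one_lt_card.mpr ⟨a, ?_, b, ?_, hab⟩ <;> simp [heq]
        · have hc : ∃ c : V, e c 0 ≠ e a 0 := by
            by_cases hva : e v 0 = e a 0
            · exact ⟨w, by rw [← hva]; exact fun h => hvw h.symm⟩
            · exact ⟨v, hva⟩
          obtain ⟨c, hc⟩ := hc
          rw [← Finset.card_univ]
          exact Finset.card_lt_card ⟨Finset.subset_univ _,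
            fun hsub => hc (by simpa using hsub (Finset.mem_univ c))⟩
        · intro x hx y hy z hz
          simp only [Finset.mem_filter, Finset.mem_univ, true_and] at hx hy hz
          rw [← e.map_rel_iff, ← e.map_rel_iff,
            C4blow_adj_head_ne _ _ (by rw [hy]; exact hx),
            C4blow_adj_head_ne _ _ (by rw [hz]; exact hx), hy, hz]
      · -- every class is a singleton: find a pair at distance 2
        push_neg at hsing
        have hinj0 : ∀ a b : V, e a 0 = e b 0 → a = b := by
          intro a b h
          by_contra hne
          exact hsing a b hne h
        obtain ⟨a, b, c, hab, hac, hbc⟩ := Fintype.two_lt_card_iff.mp (show 2 < Fintype.card V by omega)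
        have key : ∀ p q : V, p ≠ q → e p 0 - e q 0 = 2 →
            ∃ M : Finset V, 2 ≤ M.card ∧ M.card < Fintype.card V ∧
              ∀ x ∉ M, ∀ y ∈ M, ∀ z ∈ M, (G.Adj x y ↔ G.Adj x z) := by
          intro p q hpq h2
          refine ⟨{p, q}, ?_, ?_, ?_⟩
          · rw [Finset.card_pair hpq]
          · rw [Finset.card_pair hpq]; omega
          · intro x hx y hy z hz
            simp only [Finset.mem_insert, Finset.mem_singleton, not_or] at hx hy hz
            have hxp : e x 0 ≠ e p 0 := fun h => hx.1 (hinj0 _ _ h)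
            have hxq : e x 0 ≠ e q 0 := fun h => hx.2 (hinj0 _ _ h)
            have hmain : G.Adj x p ↔ G.Adj x q := by
              rw [← e.map_rel_iff, ← e.map_rel_iff,
                C4blow_adj_head_ne _ _ hxp, C4blow_adj_head_ne _ _ hxq]
              have hq : e x 0 - e q 0 = (e x 0 - e p 0) + 2 := by
                rw [← h2]; ring
              rw [hq]
              generalize e x 0 - e p 0 = d
              revert d; decide
            rcases hy with rfl | rfl <;> rcases hz with rfl | rfl <;>
              first | rfl | exact hmain | exact hmain.symm
        have hd : ∀ x y z : ZMod 4, x ≠ y → x ≠ z → y ≠ z →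
            (x - y = 2 ∨ x - z = 2 ∨ y - z = 2) := by decide
        rcases hd (e a 0) (e b 0) (e c 0)
            (fun h => hab (hinj0 _ _ h)) (fun h => hac (hinj0 _ _ h))
            (fun h => hbc (hinj0 _ _ h)) with h | h | h
        · exact key a b hab h
        · exact key a c hac h
        · exact key b c hbc h

private lemma decomp_of_module {V : Type*} [Fintype V] [DecidableEq V] (G : SimpleGraph V)
    (M : Finset V) (h2 : 2 ≤ M.card) (hlt : M.card < Fintype.card V)
    (hmod : ∀ x ∉ M, ∀ y ∈ M, ∀ z ∈ M, (G.Adj x y ↔ G.Adj x z)) :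
    ∃ (n₁ n₂ : ℕ) (F₁ : SimpleGraph (Fin n₁)) (F₂ : SimpleGraph (Fin n₂)) (v : Fin n₁),
      n₁ < Fintype.card V ∧ n₂ < Fintype.card V ∧ Nonempty (G ≃g subst F₁ F₂ v) := by
  obtain ⟨m₀, hm₀⟩ := Finset.card_pos.mp (by omega : 0 < M.card)
  have hcardA : Fintype.card {w : V // w ∉ M} = Fintype.card V - M.card := by
    rw [Fintype.card_subtype_compl]
    congr 1
    exact Fintype.card_coe M
  let A := {w : V // w ∉ M}
  let H₁ : SimpleGraph (Option A) := G.comap (fun o => o.elim m₀ Subtype.val)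
  let H₂ : SimpleGraph {x : V // x ∈ M} := G.comap Subtype.val
  let e₁ : Fin (Fintype.card (Option A)) ≃ Option A := (Fintype.equivFin (Option A)).symm
  let e₂ : Fin (Fintype.card {x : V // x ∈ M}) ≃ {x : V // x ∈ M} :=
    (Fintype.equivFin _).symm
  let F₁ := H₁.comap e₁
  let F₂ := H₂.comap e₂
  let v : Fin (Fintype.card (Option A)) := e₁.symm none
  have hcard1 : Fintype.card (Option A) = Fintype.card V - M.card + 1 := by
    rw [Fintype.card_option, hcardA]
  have hcard2 : Fintype.card {x : V // x ∈ M} = M.card := Fintype.card_coe M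
  refine ⟨_, _, F₁, F₂, v, by omega, by omega, ?_⟩
  -- the underlying equivalence
  have he₁v : e₁ v = none := e₁.apply_symm_apply none
  let ψ : ({w : Fin (Fintype.card (Option A)) // w ≠ v} ⊕
      Fin (Fintype.card {x : V // x ∈ M})) ≃ V :=
    { toFun := Sum.elim (fun w => (e₁ w.1).elim m₀ Subtype.val) (fun i => (e₂ i).1)
      invFun := fun x =>
        if hx : x ∈ M then Sum.inr (e₂.symm ⟨x, hx⟩)
        else Sum.inl ⟨e₁.symm (some ⟨x, hx⟩), fun h => by
          have := congrArg e₁ h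
          rw [Equiv.apply_symm_apply, he₁v] at this
          exact Option.some_ne_none _ this⟩
      left_inv := by
        rintro (⟨w, hw⟩ | i)
        · obtain ⟨a, ha⟩ := Option.ne_none_iff_exists'.mp
            (fun h : e₁ w = none => hw (by rw [← e₁.symm_apply_apply w, h]))
          simp only [Sum.elim_inl, ha, Option.elim_some]
          rw [dif_neg a.2]
          congr 1
          refine Subtype.ext ?_
          simp only
          rw [Subtype.coe_eta, ← ha, Equiv.symm_apply_apply]
        · simp only [Sum.elim_inr]
          simp only [(e₂ i).2, ↓reduceDIte]
          congr 1
          rw [Subtype.coe_eta, Equiv.symm_apply_apply]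
      right_inv := by
        intro x
        by_cases hx : x ∈ M
        · simp only [dif_pos hx, Sum.elim_inr, Equiv.apply_symm_apply]
        · simp only [dif_neg hx, Sum.elim_inl, Equiv.apply_symm_apply, Option.elim_some] }
  have key : ∀ p q, (subst F₁ F₂ v).Adj p q ↔ G.Adj (ψ p) (ψ q) := by
    rintro (w | i) (w' | i')
    · rfl
    · show F₁.Adj w.1 v ↔ _
      show H₁.Adj (e₁ w.1) (e₁ v) ↔ _
      rw [he₁v]
      show G.Adj ((e₁ w.1).elim m₀ Subtype.val) m₀ ↔
        G.Adj ((e₁ w.1).elim m₀ Subtype.val) (e₂ i').1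
      obtain ⟨a, ha⟩ := Option.ne_none_iff_exists'.mp
        (fun h : e₁ w.1 = none => w.2 (by rw [← e₁.symm_apply_apply w.1, h]))
      simp only [ha, Option.elim_some]
      exact hmod a.1 a.2 m₀ hm₀ (e₂ i').1 (e₂ i').2
    · show F₁.Adj w'.1 v ↔ _
      show H₁.Adj (e₁ w'.1) (e₁ v) ↔ _
      rw [he₁v]
      show G.Adj ((e₁ w'.1).elim m₀ Subtype.val) m₀ ↔
        G.Adj ((e₂ i).1) ((e₁ w'.1).elim m₀ Subtype.val)
      obtain ⟨a, ha⟩ := Option.ne_none_iff_exists'.mp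
        (fun h : e₁ w'.1 = none => w'.2 (by rw [← e₁.symm_apply_apply w'.1, h]))
      simp only [ha, Option.elim_some]
      rw [(hmod a.1 a.2 m₀ hm₀ (e₂ i).1 (e₂ i).2)]
      exact SimpleGraph.adj_comm _ _ _
    · rfl
  refine ⟨⟨ψ.symm, ?_⟩⟩
  intro a b
  rw [key, ψ.apply_symm_apply, ψ.apply_symm_apply]

/-- every prime graph embeddable into some `C4blow ℓ` has at most 2
vertices. -/
theorem prime_in_C4blow_small {V : Type*} [Fintype V] (G : SimpleGraph V)
    (hprime : ¬ ∃ (n₁ n₂ : ℕ) (F₁ : SimpleGraph (Fin n₁)) (F₂ : SimpleGraph (Fin n₂))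
      (v : Fin n₁), n₁ < Fintype.card V ∧ n₂ < Fintype.card V ∧
        Nonempty (G ≃g subst F₁ F₂ v))
    (ℓ : ℕ) (e : G ↪g C4blow ℓ) :
    Fintype.card V ≤ 2 := by
  by_contra hcard
  push_neg at hcard
  classical
  obtain ⟨M, h2, hlt, hmod⟩ := exists_module_of_embeds ℓ G e (by omega)
  exact hprime (decomp_of_module G M h2 hlt hmod)
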